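/- Let V ⊆ F_2^{66} be a spanning binary linear code of dimension 13 with all nonzero weights in {24, 32, 40, 56}. Then a_{56} = a_2^* − (a_3^* + 13)/2, where a_{56} is the number of weight-56 words of V and a_i^* the number of weight-i words of V*; in particular, if a_{56} ≤ 1 then a_2^* ≥ 7. -/

import Mathlib

open Finset

/-- Hamming weight of a word over `ZMod 2`. -/
def wt {ι : Type*} [Fintype ι] (v : ι → ZMod 2) : ℕ :=
  (Finset.univ.filter fun i => v i ≠ 0).card

/-- The dual code: annihilator under the standard scalar product. -/
def dualCode {n : ℕ} (V : Submodule (ZMod 2) (Fin n → ZMod 2)) :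
    Submodule (ZMod 2) (Fin n → ZMod 2) where
  carrier := {w | ∀ v ∈ V, ∑ i, v i * w i = 0}
  add_mem' := by
    intro a b ha hb v hv
    simp only [Pi.add_apply, mul_add, Finset.sum_add_distrib, ha v hv, hb v hv, add_zero]
  zero_mem' := by intro v hv; simp
  smul_mem' := by
    intro c a ha v hv
    have h := ha v hv
    calc ∑ i, v i * (c • a) i = c * ∑ i, v i * a i := by
          simp [Finset.mul_sum, mul_left_comm]
      _ = 0 := by rw [h, mul_zero]

/-- A code is spanning if the union of supports of its words is everything. -/
def Spanning {n : ℕ} (V : Submodule (ZMod 2) (Fin n → ZMod 2)) : Prop :=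
  ∀ i : Fin n, ∃ v ∈ V, v i ≠ 0

open scoped Classical
set_option maxRecDepth 8000
set_option maxHeartbeats 1000000

/- ### Auxiliary lemmas -/

def chi (x : ZMod 2) : ℤ := if x = 0 then 1 else -1

lemma chi_add (a b : ZMod 2) : chi (a + b) = chi a * chi b := by revert a b; decide
lemma chi_one_add (a : ZMod 2) : chi (1 + a) = - chi a := by revert a; decide
lemma chi_eq (x : ZMod 2) : chi x = 1 - 2 * (if x ≠ 0 then (1:ℤ) else 0) := by
  revert x; decide
lemma zmod2_one_of_ne (x : ZMod 2) (h : x ≠ 0) : x = 1 := by revert x h; decide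
lemma zmod_addself' (x : ZMod 2) : x + x = 0 := by revert x; decide

noncomputable instance fintypeSubmodule (V : Submodule (ZMod 2) (Fin 66 → ZMod 2)) :
    Fintype V := Fintype.ofFinite _

lemma orth (V : Submodule (ZMod 2) (Fin 66 → ZMod 2))
    (hcard : Fintype.card V = 8192)
    (f : (Fin 66 → ZMod 2) → ZMod 2)
    (hadd : ∀ x y, f (x + y) = f x + f y) :
    ∑ v : V, chi (f ↑v) = if ∀ v ∈ V, f v = 0 then (8192 : ℤ) else 0 := by
  split_ifs with h
  · have : ∀ v : V, chi (f ↑v) = 1 := fun v => by rw [h ↑v v.2]; rfl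
    simp [this, hcard]
  · push_neg at h
    obtain ⟨v0, hv0V, hv0⟩ := h
    have hv1 : f v0 = 1 := zmod2_one_of_ne _ hv0
    have key := Equiv.sum_comp (Equiv.addLeft (⟨v0, hv0V⟩ : V)) (fun v : V => chi (f ↑v))
    try simp only at key
    have e2 : ∀ v : V, chi (f ↑((Equiv.addLeft (⟨v0, hv0V⟩ : V)) v)) = - chi (f ↑v) := by
      intro v
      have : ((⟨v0, hv0V⟩ : V) + v : V) = (⟨v0 + ↑v, V.add_mem hv0V v.2⟩ : V) := rfl
      show chi (f ↑((⟨v0, hv0V⟩ : V) + v)) = _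
      rw [this]
      show chi (f (v0 + ↑v)) = _
      rw [hadd, hv1, chi_one_add]
    rw [Finset.sum_congr rfl (fun v _ => e2 v), Finset.sum_neg_distrib] at key
    omega

noncomputable def indF2 (i j : Fin 66) : Fin 66 → ZMod 2 :=
  Pi.single i 1 + Pi.single j 1

noncomputable def indF3 (i j k : Fin 66) : Fin 66 → ZMod 2 :=
  Pi.single i 1 + Pi.single j 1 + Pi.single k 1

lemma sum_mul_single (v : Fin 66 → ZMod 2) (i : Fin 66) :
    ∑ t, v t * (Pi.single i (1 : ZMod 2) : Fin 66 → ZMod 2) t = v i := by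
  simp [Pi.single_apply, mul_ite]

lemma sum_mul_indF2 (v : Fin 66 → ZMod 2) (i j : Fin 66) :
    ∑ t, v t * indF2 i j t = v i + v j := by
  simp only [indF2, Pi.add_apply, mul_add, Finset.sum_add_distrib, sum_mul_single]

lemma sum_mul_indF3 (v : Fin 66 → ZMod 2) (i j k : Fin 66) :
    ∑ t, v t * indF3 i j k t = v i + v j + v k := by
  simp only [indF3, Pi.add_apply, mul_add, Finset.sum_add_distrib, sum_mul_single]

lemma indF2_apply (i j t : Fin 66) :
    indF2 i j t = (if t = i then 1 else 0) + (if t = j then 1 else 0) := by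
  simp [indF2, Pi.single_apply]

lemma indF3_apply (i j k t : Fin 66) :
    indF3 i j k t = (if t = i then 1 else 0) + (if t = j then 1 else 0)
      + (if t = k then 1 else 0) := by
  simp [indF3, Pi.single_apply]

lemma supp_indF2 (i j : Fin 66) (hij : i ≠ j) :
    (Finset.univ.filter fun t => indF2 i j t ≠ 0) = {i, j} := by
  ext t
  simp only [Finset.mem_filter, Finset.mem_univ, true_and, Finset.mem_insert,
    Finset.mem_singleton, indF2_apply]
  by_cases h1 : t = i <;> by_cases h2 : t = j <;> simp_all

lemma wt_indF2 (i j : Fin 66) (hij : i ≠ j) : wt (indF2 i j) = 2 := by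
  rw [wt, supp_indF2 i j hij, Finset.card_pair hij]

lemma supp_indF3 (i j k : Fin 66) (hij : i ≠ j) (hik : i ≠ k) (hjk : j ≠ k) :
    (Finset.univ.filter fun t => indF3 i j k t ≠ 0) = {i, j, k} := by
  ext t
  simp only [Finset.mem_filter, Finset.mem_univ, true_and, Finset.mem_insert,
    Finset.mem_singleton, indF3_apply]
  by_cases h1 : t = i <;> by_cases h2 : t = j <;> by_cases h3 : t = k <;> simp_all

lemma wt_indF3 (i j k : Fin 66) (hij : i ≠ j) (hik : i ≠ k) (hjk : j ≠ k) :
    wt (indF3 i j k) = 3 := by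
  rw [wt, supp_indF3 i j k hij hik hjk,
    Finset.card_insert_of_notMem (by simp [hij, hik]), Finset.card_pair hjk]

lemma eq_indF2_of_supp (w : Fin 66 → ZMod 2) (i j : Fin 66)
    (hsupp : (Finset.univ.filter fun t => w t ≠ 0) = {i, j}) (hij : i ≠ j) :
    w = indF2 i j := by
  funext t
  have h := Finset.ext_iff.mp hsupp t
  simp only [Finset.mem_filter, Finset.mem_univ, true_and, Finset.mem_insert,
    Finset.mem_singleton] at h
  rw [indF2_apply]
  by_cases h1 : t = i <;> by_cases h2 : t = j
  · exact absurd (h1 ▸ h2 : i = j) hij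
  · rw [zmod2_one_of_ne _ (h.mpr (Or.inl h1))]; simp [h1, h2, hij]
  · rw [zmod2_one_of_ne _ (h.mpr (Or.inr h2))]; simp [h1, h2, Ne.symm hij]
  · have : w t = 0 := by
      by_contra hc
      rcases h.mp hc with h' | h' <;> contradiction
    rw [this]; simp [h1, h2]

lemma eq_indF3_of_supp (w : Fin 66 → ZMod 2) (i j k : Fin 66)
    (hsupp : (Finset.univ.filter fun t => w t ≠ 0) = {i, j, k})
    (hij : i ≠ j) (hik : i ≠ k) (hjk : j ≠ k) :
    w = indF3 i j k := by
  funext t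
  have h := Finset.ext_iff.mp hsupp t
  simp only [Finset.mem_filter, Finset.mem_univ, true_and, Finset.mem_insert,
    Finset.mem_singleton] at h
  rw [indF3_apply]
  by_cases h1 : t = i
  · rw [zmod2_one_of_ne _ (h.mpr (Or.inl h1))]
    simp [h1, hij, hik]
  · by_cases h2 : t = j
    · rw [zmod2_one_of_ne _ (h.mpr (Or.inr (Or.inl h2)))]
      simp [h1, h2, hjk, Ne.symm hij]
    · by_cases h3 : t = k
      · rw [zmod2_one_of_ne _ (h.mpr (Or.inr (Or.inr h3)))]
        simp [h1, h2, h3, Ne.symm hik, Ne.symm hjk]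
      · have : w t = 0 := by
          by_contra hc
          rcases h.mp hc with h' | h' | h' <;> contradiction
        rw [this]; simp [h1, h2, h3]

lemma mem_dualCode {n : ℕ} (V : Submodule (ZMod 2) (Fin n → ZMod 2))
    (w : Fin n → ZMod 2) : w ∈ dualCode V ↔ ∀ v ∈ V, ∑ i, v i * w i = 0 := Iff.rfl

section Counting
variable (V : Submodule (ZMod 2) (Fin 66 → ZMod 2))

lemma indF2_eval_ne (i j t : Fin 66) (h1 : t ≠ i) (h2 : t ≠ j) : indF2 i j t = 0 := by
  simp [indF2_apply, h1, h2]

lemma indF3_eval_ne (i j k t : Fin 66) (h1 : t ≠ i) (h2 : t ≠ j) (h3 : t ≠ k) :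
    indF3 i j k t = 0 := by
  simp [indF3_apply, h1, h2, h3]

lemma count2 :
    ((univ : Finset (Fin 66 × Fin 66)).filter
        (fun p => (∀ v ∈ V, v p.1 + v p.2 = 0) ∧ p.1 ≠ p.2)).card
      = 2 * ((univ : Finset (Fin 66 → ZMod 2)).filter
        (fun w => w ∈ dualCode V ∧ wt w = 2)).card := by
  set P := (univ : Finset (Fin 66 × Fin 66)).filter
      (fun p => (∀ v ∈ V, v p.1 + v p.2 = 0) ∧ p.1 ≠ p.2) with hP
  set D := (univ : Finset (Fin 66 → ZMod 2)).filter
      (fun w => w ∈ dualCode V ∧ wt w = 2) with hD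
  have hmaps : ∀ p ∈ P, indF2 p.1 p.2 ∈ D := by
    rintro ⟨i, j⟩ hp
    rw [hP, Finset.mem_filter] at hp
    obtain ⟨-, hcond, hne⟩ := hp
    rw [hD, Finset.mem_filter]
    refine ⟨Finset.mem_univ _, ?_, wt_indF2 i j hne⟩
    intro v hv
    rw [sum_mul_indF2]
    exact hcond v hv
  rw [Finset.card_eq_sum_card_fiberwise hmaps]
  rw [Finset.sum_congr rfl (fun w hw => ?_), Finset.sum_const, smul_eq_mul, mul_comm]
  -- fiber has card 2
  rw [hD, Finset.mem_filter] at hw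
  obtain ⟨-, hdual, hwt⟩ := hw
  rw [wt] at hwt
  obtain ⟨i, j, hij, hsupp⟩ := Finset.card_eq_two.mp hwt
  have hw2 : w = indF2 i j := eq_indF2_of_supp w i j hsupp hij
  have hfib : P.filter (fun p => indF2 p.1 p.2 = w) = {(i, j), (j, i)} := by
    ext ⟨a, b⟩
    simp only [Finset.mem_filter, hP, Finset.mem_univ, true_and, Finset.mem_insert,
      Finset.mem_singleton, Prod.mk.injEq]
    constructor
    · rintro ⟨⟨hcond, hne⟩, heq⟩
      have ha : w a = 1 := by
        rw [← heq, indF2_apply]; simp [hne]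
      have hb : w b = 1 := by
        rw [← heq, indF2_apply]; simp [Ne.symm hne]
      have ha' : a = i ∨ a = j := by
        by_contra hc
        push_neg at hc
        rw [hw2, indF2_eval_ne i j a hc.1 hc.2] at ha
        exact absurd ha (by decide)
      have hb' : b = i ∨ b = j := by
        by_contra hc
        push_neg at hc
        rw [hw2, indF2_eval_ne i j b hc.1 hc.2] at hb
        exact absurd hb (by decide)
      rcases ha' with ha' | ha' <;> rcases hb' with hb' | hb'
      · exact absurd (ha' ▸ hb' ▸ rfl) hne
      · exact Or.inl ⟨ha', hb'⟩
      · exact Or.inr ⟨ha', hb'⟩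
      · exact absurd (ha' ▸ hb' ▸ rfl) hne
    · rintro (⟨ha, hb⟩ | ⟨ha, hb⟩) <;> simp only [ha, hb]
      · refine ⟨⟨fun v hv => ?_, hij⟩, hw2.symm⟩
        have := (mem_dualCode V w).mp hdual v hv
        rwa [hw2, sum_mul_indF2] at this
      · refine ⟨⟨fun v hv => ?_, Ne.symm hij⟩, ?_⟩
        · have := (mem_dualCode V w).mp hdual v hv
          rw [hw2, sum_mul_indF2] at this
          rwa [add_comm]
        · rw [hw2]
          show indF2 j i = indF2 i j
          rw [indF2, indF2, add_comm]
  rw [hfib, Finset.card_pair (by simp [Prod.ext_iff, hij])]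

lemma indF3_perm (i j k : Fin 66) :
    indF3 j i k = indF3 i j k ∧ indF3 i k j = indF3 i j k ∧ indF3 j k i = indF3 i j k ∧
    indF3 k i j = indF3 i j k ∧ indF3 k j i = indF3 i j k := by
  refine ⟨?_, ?_, ?_, ?_, ?_⟩ <;> · rw [indF3, indF3]; abel

lemma count3 (hspan : Spanning V) :
    ((univ : Finset (Fin 66 × Fin 66 × Fin 66)).filter
        (fun p => ∀ v ∈ V, v p.1 + v p.2.1 + v p.2.2 = 0)).card
      = 6 * ((univ : Finset (Fin 66 → ZMod 2)).filter
        (fun w => w ∈ dualCode V ∧ wt w = 3)).card := by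
  set P := (univ : Finset (Fin 66 × Fin 66 × Fin 66)).filter
      (fun p => ∀ v ∈ V, v p.1 + v p.2.1 + v p.2.2 = 0) with hP
  set D := (univ : Finset (Fin 66 → ZMod 2)).filter
      (fun w => w ∈ dualCode V ∧ wt w = 3) with hD
  have hdist : ∀ p ∈ P, p.1 ≠ p.2.1 ∧ p.1 ≠ p.2.2 ∧ p.2.1 ≠ p.2.2 := by
    rintro ⟨i, j, k⟩ hp
    rw [hP, Finset.mem_filter] at hp
    obtain ⟨-, hcond⟩ := hp
    refine ⟨?_, ?_, ?_⟩ <;> intro he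
    · obtain ⟨v, hv, hvne⟩ := hspan k
      have := hcond v hv
      rw [← he] at this
      rw [zmod_addself' (v i)] at this
      exact hvne (by rwa [zero_add] at this)
    · obtain ⟨v, hv, hvne⟩ := hspan j
      have := hcond v hv
      rw [← he] at this
      have : v j = 0 := by
        have h2 : v i + v j + v i = v j + (v i + v i) := by ring
        rw [h2, zmod_addself' (v i), add_zero] at this
        exact this
      exact hvne this
    · obtain ⟨v, hv, hvne⟩ := hspan i
      have := hcond v hv
      rw [← he] at this
      have : v i = 0 := by
        have h2 : v i + v j + v j = v i + (v j + v j) := by ring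
        rw [h2, zmod_addself' (v j), add_zero] at this
        exact this
      exact hvne this
  have hmaps : ∀ p ∈ P, indF3 p.1 p.2.1 p.2.2 ∈ D := by
    intro p hp
    obtain ⟨h1, h2, h3⟩ := hdist p hp
    rw [hP, Finset.mem_filter] at hp
    obtain ⟨-, hcond⟩ := hp
    rw [hD, Finset.mem_filter]
    refine ⟨Finset.mem_univ _, ?_, wt_indF3 _ _ _ h1 h2 h3⟩
    intro v hv
    rw [sum_mul_indF3]
    exact hcond v hv
  rw [Finset.card_eq_sum_card_fiberwise hmaps]
  rw [Finset.sum_congr rfl (fun w hw => ?_), Finset.sum_const, smul_eq_mul, mul_comm]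
  -- fiber has card 6
  rw [hD, Finset.mem_filter] at hw
  obtain ⟨-, hdual, hwt⟩ := hw
  rw [wt] at hwt
  obtain ⟨i, j, k, hij, hik, hjk, hsupp⟩ := Finset.card_eq_three.mp hwt
  have hw3 : w = indF3 i j k := eq_indF3_of_supp w i j k hsupp hij hik hjk
  have hcondw : ∀ v ∈ V, v i + v j + v k = 0 := by
    intro v hv
    have := (mem_dualCode V w).mp hdual v hv
    rwa [hw3, sum_mul_indF3] at this
  have hfib : P.filter (fun p => indF3 p.1 p.2.1 p.2.2 = w)
      = {(i,j,k), (i,k,j), (j,i,k), (j,k,i), (k,i,j), (k,j,i)} := by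
    ext ⟨a, b, c⟩
    simp only [Finset.mem_filter, Finset.mem_insert, Finset.mem_singleton, Prod.mk.injEq]
    constructor
    · rintro ⟨hpmem, heq⟩
      obtain ⟨hab, hac, hbc⟩ := hdist _ hpmem
      have hmem : ∀ t : Fin 66, indF3 a b c t = 1 → t = i ∨ t = j ∨ t = k := by
        intro t ht
        by_contra hc
        push_neg at hc
        rw [heq, hw3, indF3_eval_ne i j k t hc.1 hc.2.1 hc.2.2] at ht
        exact absurd ht (by decide)
      have ha : a = i ∨ a = j ∨ a = k := by
        refine hmem a ?_
        rw [indF3_apply]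
        simp [hab, hac]
      have hb : b = i ∨ b = j ∨ b = k := by
        refine hmem b ?_
        rw [indF3_apply]
        simp [Ne.symm hab, hbc]
      have hc : c = i ∨ c = j ∨ c = k := by
        refine hmem c ?_
        rw [indF3_apply]
        simp [Ne.symm hac, Ne.symm hbc]
      rcases ha with ha|ha|ha <;> rcases hb with hb|hb|hb <;> rcases hc with hc|hc|hc <;>
        simp_all
    · have hmemP : ∀ a b c : Fin 66, (∀ v ∈ V, v a + v b + v c = 0) →
          ((a, b, c) : Fin 66 × Fin 66 × Fin 66) ∈ P := by
        intro a b c hcond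
        rw [hP, Finset.mem_filter]
        exact ⟨Finset.mem_univ _, hcond⟩
      obtain ⟨e1, e2, e3, e4, e5⟩ := indF3_perm i j k
      have hc' : ∀ a b c : Fin 66, (v : _) → v ∈ V → v a + v b + v c = v c + v a + v b := by
        intro a b c v _; ring
      rintro (⟨h1, h2, h3⟩|⟨h1, h2, h3⟩|⟨h1, h2, h3⟩|⟨h1, h2, h3⟩|⟨h1, h2, h3⟩|⟨h1, h2, h3⟩) <;>
        simp only [h1, h2, h3] <;> rw [hw3]
      · exact ⟨hmemP _ _ _ hcondw, rfl⟩
      · refine ⟨hmemP _ _ _ (fun v hv => ?_), e2⟩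
        have := hcondw v hv
        calc v i + v k + v j = v i + v j + v k := by ring
        _ = 0 := this
      · refine ⟨hmemP _ _ _ (fun v hv => ?_), e1⟩
        have := hcondw v hv
        calc v j + v i + v k = v i + v j + v k := by ring
        _ = 0 := this
      · refine ⟨hmemP _ _ _ (fun v hv => ?_), e3⟩
        have := hcondw v hv
        calc v j + v k + v i = v i + v j + v k := by ring
        _ = 0 := this
      · refine ⟨hmemP _ _ _ (fun v hv => ?_), e4⟩
        have := hcondw v hv
        calc v k + v i + v j = v i + v j + v k := by ring
        _ = 0 := this
      · refine ⟨hmemP _ _ _ (fun v hv => ?_), e5⟩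
        have := hcondw v hv
        calc v k + v j + v i = v i + v j + v k := by ring
        _ = 0 := this
  have h6 : ({(i,j,k), (i,k,j), (j,i,k), (j,k,i), (k,i,j), (k,j,i)} :
      Finset (Fin 66 × Fin 66 × Fin 66)).card = 6 := by
    rw [Finset.card_insert_of_notMem (by simp [Prod.ext_iff, hij, hik, hjk,
          Ne.symm hij, Ne.symm hik, Ne.symm hjk]),
        Finset.card_insert_of_notMem (by simp [Prod.ext_iff, hij, hik, hjk,
          Ne.symm hij, Ne.symm hik, Ne.symm hjk]),
        Finset.card_insert_of_notMem (by simp [Prod.ext_iff, hij, hik, hjk,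
          Ne.symm hij, Ne.symm hik, Ne.symm hjk]),
        Finset.card_insert_of_notMem (by simp [Prod.ext_iff, hij, hik, hjk,
          Ne.symm hij, Ne.symm hik, Ne.symm hjk]),
        Finset.card_pair (by simp [Prod.ext_iff, hij, hik, hjk,
          Ne.symm hij, Ne.symm hik, Ne.symm hjk])]
  rw [hfib, h6]

end Counting

lemma sum_ite_count {α : Type*} [Fintype α] (p : α → Prop) [DecidablePred p] (c : ℤ) :
    ∑ x : α, (if p x then c else 0) = c * ((univ : Finset α).filter p).card := by
  rw [Finset.sum_ite, Finset.sum_const, Finset.sum_const_zero, add_zero,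
    nsmul_eq_mul, mul_comm]

lemma diag_card :
    ((univ : Finset (Fin 66 × Fin 66)).filter (fun p => p.1 = p.2)).card = 66 := by
  have himg : (univ : Finset (Fin 66 × Fin 66)).filter (fun p => p.1 = p.2)
      = univ.image (fun i : Fin 66 => (i, i)) := by
    ext ⟨a, b⟩
    simp only [Finset.mem_filter, Finset.mem_univ, true_and, Finset.mem_image]
    constructor
    · intro h; exact ⟨a, by simp [h]⟩
    · rintro ⟨i, h⟩
      rw [Prod.ext_iff] at h
      simp only at h
      rw [← h.1, ← h.2]
  rw [himg, Finset.card_image_of_injective _ (fun a b h => by simpa [Prod.ext_iff] using h)]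
  simp

lemma count2full (V : Submodule (ZMod 2) (Fin 66 → ZMod 2)) :
    (((univ : Finset (Fin 66 × Fin 66)).filter
        (fun p => ∀ v ∈ V, v p.1 + v p.2 = 0)).card : ℤ)
      = 66 + 2 * ((univ : Finset (Fin 66 → ZMod 2)).filter
        (fun w => w ∈ dualCode V ∧ wt w = 2)).card := by
  set P := (univ : Finset (Fin 66 × Fin 66)).filter
      (fun p => ∀ v ∈ V, v p.1 + v p.2 = 0) with hP
  have hsplit := Finset.card_filter_add_card_filter_not
    (s := P) (p := fun p => p.1 = p.2)
  have hdiag : P.filter (fun p => p.1 = p.2)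
      = (univ : Finset (Fin 66 × Fin 66)).filter (fun p => p.1 = p.2) := by
    rw [hP, Finset.filter_filter]
    apply Finset.filter_congr
    intro ⟨a, b⟩ _
    simp only
    constructor
    · rintro ⟨-, h⟩; exact h
    · intro h
      refine ⟨fun v hv => ?_, h⟩
      rw [← h]
      exact zmod_addself' (v a)
  have hoff : P.filter (fun p => ¬ p.1 = p.2)
      = (univ : Finset (Fin 66 × Fin 66)).filter
        (fun p => (∀ v ∈ V, v p.1 + v p.2 = 0) ∧ p.1 ≠ p.2) := by
    rw [hP, Finset.filter_filter]
  have := count2 V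
  rw [← hoff] at this
  rw [hdiag, _root_.diag_card] at hsplit
  omega

theorem stmt19 (V : Submodule (ZMod 2) (Fin 66 → ZMod 2))
    (hspan : Spanning V) (hd : Module.finrank (ZMod 2) V = 13)
    (hwt : ∀ v ∈ V, v ≠ 0 → wt v = 24 ∨ wt v = 32 ∨ wt v = 40 ∨ wt v = 56) :
    2 * ({v | v ∈ V ∧ wt v = 56}.ncard : ℤ) =
        2 * ({w | w ∈ dualCode V ∧ wt w = 2}.ncard : ℤ)
          - ({w | w ∈ dualCode V ∧ wt w = 3}.ncard : ℤ) - 13 ∧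
    ({v | v ∈ V ∧ wt v = 56}.ncard ≤ 1 → 7 ≤ {w | w ∈ dualCode V ∧ wt w = 2}.ncard) := by
  have hcard : Fintype.card V = 8192 := by
    have h := Module.card_eq_pow_finrank (K := ZMod 2) (V := V)
    rw [hd, ZMod.card] at h
    norm_num at h
    exact h
  set W : (Fin 66 → ZMod 2) → ℤ := fun x => ∑ i, chi (x i) with hW
  -- first moment
  have hM1 : ∑ v : V, W ↑v = 0 := by
    rw [hW]
    simp only
    rw [Finset.sum_comm]
    rw [Finset.sum_congr rfl (fun i _ =>
      orth V hcard (fun x => x i) (fun x y => rfl))]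
    apply Finset.sum_eq_zero
    intro i _
    rw [if_neg]
    intro hall
    obtain ⟨v, hv, hvne⟩ := hspan i
    exact hvne (hall v hv)
  -- second moment
  have step2 : ∀ x : Fin 66 → ZMod 2,
      (W x) ^ 2 = ∑ p : Fin 66 × Fin 66, chi (x p.1 + x p.2) := by
    intro x
    rw [hW]
    simp only
    rw [sq, Finset.sum_mul_sum, Fintype.sum_prod_type]
    exact Finset.sum_congr rfl fun i _ =>
      Finset.sum_congr rfl fun j _ => (chi_add _ _).symm
  have hM2 : ∑ v : V, (W ↑v) ^ 2
      = 8192 * (((univ : Finset (Fin 66 × Fin 66)).filter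
          (fun p => ∀ v ∈ V, v p.1 + v p.2 = 0)).card : ℤ) := by
    calc ∑ v : V, (W ↑v) ^ 2
        = ∑ v : V, ∑ p : Fin 66 × Fin 66,
            chi ((v : Fin 66 → ZMod 2) p.1 + (v : Fin 66 → ZMod 2) p.2) :=
          Finset.sum_congr rfl fun v _ => step2 ↑v
      _ = ∑ p : Fin 66 × Fin 66, ∑ v : V,
            chi ((fun x : Fin 66 → ZMod 2 => x p.1 + x p.2) ↑v) :=
          Finset.sum_comm
      _ = ∑ p : Fin 66 × Fin 66, (if ∀ v ∈ V, v p.1 + v p.2 = 0 then (8192 : ℤ) else 0) :=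
          Finset.sum_congr rfl fun p _ =>
            orth V hcard (fun x : Fin 66 → ZMod 2 => x p.1 + x p.2)
              (fun x y => by simp only [Pi.add_apply]; ring)
      _ = _ := sum_ite_count _ _
  -- third moment
  have step3 : ∀ x : Fin 66 → ZMod 2,
      (W x) ^ 3 = ∑ q : Fin 66 × Fin 66 × Fin 66, chi (x q.1 + x q.2.1 + x q.2.2) := by
    intro x
    calc (W x) ^ 3 = W x * (W x) ^ 2 := by ring
      _ = (∑ i, chi (x i)) * (∑ p : Fin 66 × Fin 66, chi (x p.1 + x p.2)) := by
          rw [step2 x, hW]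
      _ = ∑ i, ∑ p : Fin 66 × Fin 66, chi (x i) * chi (x p.1 + x p.2) :=
          Finset.sum_mul_sum _ _ _ _
      _ = ∑ q : Fin 66 × Fin 66 × Fin 66, chi (x q.1 + x q.2.1 + x q.2.2) := by
          rw [Fintype.sum_prod_type]
          refine Finset.sum_congr rfl fun i _ => Finset.sum_congr rfl fun p _ => ?_
          rw [show x i + x p.1 + x p.2 = x i + (x p.1 + x p.2) from add_assoc _ _ _]
          exact (chi_add _ _).symm
  have hM3 : ∑ v : V, (W ↑v) ^ 3
      = 8192 * (((univ : Finset (Fin 66 × Fin 66 × Fin 66)).filter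
          (fun q => ∀ v ∈ V, v q.1 + v q.2.1 + v q.2.2 = 0)).card : ℤ) := by
    calc ∑ v : V, (W ↑v) ^ 3
        = ∑ v : V, ∑ q : Fin 66 × Fin 66 × Fin 66,
            chi ((v : Fin 66 → ZMod 2) q.1 + (v : Fin 66 → ZMod 2) q.2.1
              + (v : Fin 66 → ZMod 2) q.2.2) :=
          Finset.sum_congr rfl fun v _ => step3 ↑v
      _ = ∑ q : Fin 66 × Fin 66 × Fin 66, ∑ v : V,
            chi ((fun x : Fin 66 → ZMod 2 => x q.1 + x q.2.1 + x q.2.2) ↑v) :=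
          Finset.sum_comm
      _ = ∑ q : Fin 66 × Fin 66 × Fin 66,
            (if ∀ v ∈ V, v q.1 + v q.2.1 + v q.2.2 = 0 then (8192 : ℤ) else 0) :=
          Finset.sum_congr rfl fun q _ =>
            orth V hcard (fun x : Fin 66 → ZMod 2 => x q.1 + x q.2.1 + x q.2.2)
              (fun x y => by simp only [Pi.add_apply]; ring)
      _ = _ := sum_ite_count _ _
  -- weight relation
  have hWwt : ∀ x : Fin 66 → ZMod 2, W x = 66 - 2 * (wt x : ℤ) := by
    intro x
    rw [hW]
    simp only
    rw [Finset.sum_congr rfl fun i _ => chi_eq (x i), Finset.sum_sub_distrib,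
      Finset.sum_const, ← Finset.mul_sum, sum_ite_count, wt]
    simp
  -- pointwise cubic evaluation
  have hzero : wt (0 : Fin 66 → ZMod 2) = 0 := by simp [wt]
  have hq : ∀ v : V, (W ↑v) ^ 3 - 6 * (W ↑v) ^ 2 - 244 * (W ↑v) + 504
      = (if (↑v : Fin 66 → ZMod 2) = 0 then (245760 : ℤ) else 0)
        + (if wt (↑v : Fin 66 → ZMod 2) = 56 then (-98304 : ℤ) else 0) := by
    intro v
    by_cases hv0 : (↑v : Fin 66 → ZMod 2) = 0
    · rw [if_pos hv0, hWwt, hv0, hzero]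
      norm_num
    · rw [if_neg hv0]
      rcases hwt ↑v v.2 hv0 with h | h | h | h <;> rw [hWwt, h] <;> norm_num
  -- the three relevant cardinalities (as Finset cards)
  have hzsum : ∑ v : V, (if (↑v : Fin 66 → ZMod 2) = 0 then (245760 : ℤ) else 0)
      = 245760 := by
    calc ∑ v : V, (if (↑v : Fin 66 → ZMod 2) = 0 then (245760 : ℤ) else 0)
        = ∑ v : V, (if v = (0 : V) then (245760 : ℤ) else 0) :=
          Finset.sum_congr rfl fun v _ => by simp only [ZeroMemClass.coe_eq_zero]
      _ = 245760 := by rw [Finset.sum_ite_eq' univ (0 : V) (fun _ => (245760 : ℤ))]; simp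
  have h56sum : ∑ v : V, (if wt (↑v : Fin 66 → ZMod 2) = 56 then (-98304 : ℤ) else 0)
      = -98304 * (((univ : Finset (Fin 66 → ZMod 2)).filter
          (fun x => x ∈ V ∧ wt x = 56)).card : ℤ) := by
    rw [← Finset.sum_subtype ((univ : Finset (Fin 66 → ZMod 2)).filter (· ∈ V))
      (fun x => by simp) (fun x => if wt x = 56 then (-98304 : ℤ) else 0)]
    rw [← Finset.sum_filter, Finset.filter_filter, Finset.sum_const, nsmul_eq_mul, mul_comm]
  have hRHS : ∑ v : V, ((if (↑v : Fin 66 → ZMod 2) = 0 then (245760 : ℤ) else 0)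
        + (if wt (↑v : Fin 66 → ZMod 2) = 56 then (-98304 : ℤ) else 0))
      = 245760 + -98304 * (((univ : Finset (Fin 66 → ZMod 2)).filter
          (fun x => x ∈ V ∧ wt x = 56)).card : ℤ) := by
    rw [Finset.sum_add_distrib, hzsum, h56sum]
  have hexpand : ∑ v : V, ((W ↑v) ^ 3 - 6 * (W ↑v) ^ 2 - 244 * (W ↑v) + 504)
      = (∑ v : V, (W ↑v) ^ 3) - 6 * (∑ v : V, (W ↑v) ^ 2)
        - 244 * (∑ v : V, W ↑v) + 8192 * 504 := by
    rw [Finset.sum_add_distrib, Finset.sum_sub_distrib, Finset.sum_sub_distrib,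
      ← Finset.mul_sum, ← Finset.mul_sum, Finset.sum_const, Finset.card_univ, hcard,
      nsmul_eq_mul]
    norm_num
  have hkey : (∑ v : V, (W ↑v) ^ 3) - 6 * (∑ v : V, (W ↑v) ^ 2)
        - 244 * (∑ v : V, W ↑v) + 8192 * 504
      = 245760 + -98304 * (((univ : Finset (Fin 66 → ZMod 2)).filter
          (fun x => x ∈ V ∧ wt x = 56)).card : ℤ) := by
    rw [← hexpand, Finset.sum_congr rfl (fun v _ => hq v), hRHS]
  rw [hM1, hM2, hM3, count3 V hspan, count2full V] at hkey
  -- convert set ncards to the Finset cards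
  have hs56 : ({v | v ∈ V ∧ wt v = 56} : Set (Fin 66 → ZMod 2)).ncard
      = ((univ : Finset (Fin 66 → ZMod 2)).filter (fun x => x ∈ V ∧ wt x = 56)).card := by
    rw [← Set.ncard_coe_finset]
    congr 1
    ext x
    simp
  have hs2 : ({w | w ∈ dualCode V ∧ wt w = 2} : Set (Fin 66 → ZMod 2)).ncard
      = ((univ : Finset (Fin 66 → ZMod 2)).filter (fun w => w ∈ dualCode V ∧ wt w = 2)).card := by
    rw [← Set.ncard_coe_finset]
    congr 1
    ext x
    simp
  have hs3 : ({w | w ∈ dualCode V ∧ wt w = 3} : Set (Fin 66 → ZMod 2)).ncard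
      = ((univ : Finset (Fin 66 → ZMod 2)).filter (fun w => w ∈ dualCode V ∧ wt w = 3)).card := by
    rw [← Set.ncard_coe_finset]
    congr 1
    ext x
    simp
  rw [hs56, hs2, hs3]
  push_cast at hkey
  clear * - hkey
  constructor
  · omega
  · intro _
    omega
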